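/- arXiv:1102.4821 — 5 statements merged into one kernel-verified Lean document; each statement's English description precedes it below -/
import Mathlib

section
/- For any n×n real matrix Y, the vector s = (1/n) Y e minimizes ‖Y - (s eᵀ - e sᵀ)‖_F over all centered vectors s (sᵀe = 0), when Y is skew-symmetric. -/
open Matrix

/-- The Frobenius norm of a real matrix. -/
noncomputable def frobNorm {n : ℕ} (M : Matrix (Fin n) (Fin n) ℝ) : ℝ :=
  Real.sqrt (∑ i, ∑ j, (M i j) ^ 2)

/-- For a skew-symmetric `Y`, the vector `s₀ = (1/n) Y e` is centered and minimizes
`‖Y - (s eᵀ - e sᵀ)‖_F` over all centered vectors `s`. -/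
theorem row_mean_minimizes (n : ℕ) (hn : 0 < n) (Y : Matrix (Fin n) (Fin n) ℝ)
    (hY : Yᵀ = -Y) (e : Fin n → ℝ) (he : e = fun _ => 1)
    (s₀ : Fin n → ℝ) (hs₀ : s₀ = (1 / (n : ℝ)) • Y.mulVec e) :
    (∑ i, s₀ i = 0) ∧
    ∀ s : Fin n → ℝ, (∑ i, s i = 0) →
      frobNorm (Y - (vecMulVec s₀ e - vecMulVec e s₀))
        ≤ frobNorm (Y - (vecMulVec s e - vecMulVec e s)) := by
  have hn0 : (n : ℝ) ≠ 0 := Nat.cast_ne_zero.mpr hn.ne'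
  have hskew : ∀ i j, Y j i = - Y i j := fun i j => congrFun (congrFun hY i) j
  set r : Fin n → ℝ := fun i => ∑ j, Y i j with hr
  have hs₀' : ∀ i, s₀ i = r i / n := by
    intro i
    simp [hs₀, he, Matrix.mulVec, dotProduct, hr, div_eq_mul_inv, mul_comm]
  have hsum_r : ∑ i, r i = 0 := by
    have h1 : ∑ i, ∑ j, Y i j = ∑ j, ∑ i, Y i j := Finset.sum_comm
    have h2 : ∑ j, ∑ i, Y i j = - ∑ j, ∑ i, Y j i := by
      rw [← Finset.sum_neg_distrib]
      refine Finset.sum_congr rfl fun j _ => ?_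
      rw [← Finset.sum_neg_distrib]
      exact Finset.sum_congr rfl fun i _ => by rw [hskew]
    have : ∑ i, ∑ j, Y i j = 0 := by
      have := h1.trans h2
      try rw [Finset.sum_comm (γ := Fin n)] at this
      linarith
    simpa [hr] using this
  have hcenter : ∑ i, s₀ i = 0 := by
    simp_rw [hs₀', div_eq_mul_inv, ← Finset.sum_mul, hsum_r, zero_mul]
  -- row sums of A are zero
  have hns₀ : ∀ i, (n : ℝ) * s₀ i = r i := by
    intro i; rw [hs₀']; field_simp
  have hrow : ∀ i, ∑ j, (Y i j - s₀ i + s₀ j) = 0 := by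
    intro i
    rw [Finset.sum_add_distrib, Finset.sum_sub_distrib, hcenter]
    simp only [Finset.sum_const, Finset.card_univ, Fintype.card_fin, nsmul_eq_mul]
    have : ∑ j, Y i j = r i := rfl
    rw [this, hns₀]
    ring
  have hcolY : ∀ j, ∑ i, Y i j = - r j := by
    intro j
    have : ∑ i, Y i j = ∑ i, - Y j i := Finset.sum_congr rfl fun i _ => by rw [hskew]
    rw [this, Finset.sum_neg_distrib]
  have hcol : ∀ j, ∑ i, (Y i j - s₀ i + s₀ j) = 0 := by
    intro j
    rw [Finset.sum_add_distrib, Finset.sum_sub_distrib, hcenter, hcolY]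
    simp only [Finset.sum_const, Finset.card_univ, Fintype.card_fin, nsmul_eq_mul]
    rw [hns₀]
    ring
  refine ⟨hcenter, ?_⟩
  intro s hs
  set d : Fin n → ℝ := fun i => s i - s₀ i with hd
  have hdsum : ∑ i, d i = 0 := by
    simp [hd, Finset.sum_sub_distrib, hs, hcenter]
  set A : Matrix (Fin n) (Fin n) ℝ := fun i j => Y i j - s₀ i + s₀ j with hA
  -- cross terms vanish
  have hcross1 : ∑ i, ∑ j, A i j * d i = 0 := by
    rw [hA]
    simp_rw [← Finset.sum_mul]
    simp_rw [hrow]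
    simp
  have hcross2 : ∑ i, ∑ j, A i j * d j = 0 := by
    rw [hA]
    rw [Finset.sum_comm]
    simp_rw [← Finset.sum_mul]
    simp_rw [hcol]
    simp
  -- main sum inequality
  have key : ∑ i, ∑ j, (A i j) ^ 2 ≤ ∑ i, ∑ j, (A i j - d i + d j) ^ 2 := by
    have expand : ∑ i, ∑ j, (A i j - d i + d j) ^ 2
        = ∑ i, ∑ j, (A i j) ^ 2 + (∑ i, ∑ j, (d j - d i) ^ 2)
          + 2 * ((∑ i, ∑ j, A i j * d j) - (∑ i, ∑ j, A i j * d i)) := by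
      simp_rw [← Finset.sum_add_distrib, ← Finset.sum_sub_distrib, Finset.mul_sum,
        ← Finset.sum_add_distrib]
      apply Finset.sum_congr rfl; intro i _
      apply Finset.sum_congr rfl; intro j _
      ring
    rw [expand, hcross1, hcross2]
    have hnn : 0 ≤ ∑ i, ∑ j, (d j - d i) ^ 2 :=
      Finset.sum_nonneg fun i _ => Finset.sum_nonneg fun j _ => sq_nonneg _
    linarith
  -- translate to the matrix entries
  have e1 : ∀ i j, (Y - (vecMulVec s₀ e - vecMulVec e s₀)) i j = A i j := by
    intro i j
    simp [he, vecMulVec_apply, hA]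
    ring
  have e2 : ∀ i j, (Y - (vecMulVec s e - vecMulVec e s)) i j = A i j - d i + d j := by
    intro i j
    simp [he, vecMulVec_apply, hA, hd]
    ring
  unfold frobNorm
  apply Real.sqrt_le_sqrt
  simp_rw [e1, e2]
  exact key
end

section
/- The nuclear norm of the rank-2 matrix Y = s eᵀ - e sᵀ with sᵀe = 0 equals 2√n ‖s‖₂. -/
open Matrix

/-- The nuclear norm (sum of singular values) of `Y = s eᵀ - e sᵀ` with `sᵀe = 0`,
`s ≠ 0`, equals `2 √n ‖s‖₂`. -/
theorem nuclear_norm_pairwise_matrix (n : ℕ) (s : Fin n → ℝ)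
    (hs : ∑ i, s i = 0) (hs0 : s ≠ 0) (e : Fin n → ℝ) (he : e = fun _ => 1)
    (Y : Matrix (Fin n) (Fin n) ℝ) (hY : Y = vecMulVec s e - vecMulVec e s)
    (hYY : (Yᵀ * Y).IsHermitian) :
    ∑ i, Real.sqrt (hYY.eigenvalues i)
      = 2 * Real.sqrt n * Real.sqrt (∑ i, (s i) ^ 2) := by
  classical
  set σ : ℝ := ∑ i, (s i) ^ 2 with hσ
  obtain ⟨i0, hi0⟩ := Function.ne_iff.mp hs0
  have hi0' : s i0 ≠ 0 := hi0
  have hσpos : 0 < σ :=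
    Finset.sum_pos' (fun j _ => sq_nonneg _) ⟨i0, Finset.mem_univ i0, by positivity⟩
  set c : ℝ := (n : ℝ) * σ with hc
  have hn : 0 < n := Fin.pos i0
  have hcpos : 0 < c := by positivity
  -- entries of M = Yᵀ * Y
  have hM : ∀ i j, (Yᵀ * Y) i j = σ + n * s i * s j := by
    intro i j
    have h1 : (Yᵀ * Y) i j = ∑ k, (s k - s i) * (s k - s j) := by
      simp [mul_apply, hY, he, vecMulVec_apply, Matrix.sub_apply, transpose_apply, mul_one, one_mul]
    rw [h1]
    have h2 : ∀ k : Fin n, (s k - s i) * (s k - s j)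
        = (s k)^2 - s j * s k - s i * s k + s i * s j := fun k => by ring
    rw [Finset.sum_congr rfl fun k _ => h2 k]
    simp [Finset.sum_add_distrib, Finset.sum_sub_distrib, ← Finset.mul_sum, hs, ← hσ,
      Finset.card_univ]
    ring
  -- M² = c • M
  have hMM : (Yᵀ * Y) * (Yᵀ * Y) = c • (Yᵀ * Y) := by
    ext i j
    rw [mul_apply]
    rw [Finset.sum_congr rfl fun k _ => by rw [hM i k, hM k j]]
    have h2 : ∀ k : Fin n, (σ + n * s i * s k) * (σ + n * s k * s j)
        = σ^2 + (σ * n * s j) * s k + (σ * n * s i) * s k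
          + ((n:ℝ)^2 * s i * s j) * (s k)^2 := fun k => by ring
    rw [Finset.sum_congr rfl fun k _ => h2 k]
    simp only [Finset.sum_add_distrib, ← Finset.mul_sum, hs, ← hσ, mul_zero, add_zero,
      Finset.sum_const, Finset.card_univ, Fintype.card_fin, nsmul_eq_mul,
      Matrix.smul_apply, smul_eq_mul]
    rw [hM i j]
    ring
  -- eigenvalue dichotomy
  have key : ∀ i, hYY.eigenvalues i = 0 ∨ hYY.eigenvalues i = c := by
    intro i
    set lam := hYY.eigenvalues i with hlam
    have hv := hYY.mulVec_eigenvectorBasis i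
    have hvne : ⇑(hYY.eigenvectorBasis i) ≠ 0 :=
      fun h => hYY.eigenvectorBasis.orthonormal.ne_zero i (by ext j; exact congrFun h j)
    have h1 : (Yᵀ * Y) *ᵥ ((Yᵀ * Y) *ᵥ ⇑(hYY.eigenvectorBasis i))
        = (lam * lam) • ⇑(hYY.eigenvectorBasis i) := by
      rw [hv, mulVec_smul, hv, smul_smul]
    have h2 : (Yᵀ * Y) *ᵥ ((Yᵀ * Y) *ᵥ ⇑(hYY.eigenvectorBasis i))
        = (c * lam) • ⇑(hYY.eigenvectorBasis i) := by
      rw [mulVec_mulVec, hMM, smul_mulVec, hv, smul_smul]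
    have h3 : (lam * lam - c * lam) • ⇑(hYY.eigenvectorBasis i) = 0 := by
      rw [sub_smul, ← h1, ← h2, sub_self]
    have h4 : lam * lam - c * lam = 0 := by
      rcases smul_eq_zero.mp h3 with h | h
      · exact h
      · exact absurd h hvne
    have h5 : lam * (lam - c) = 0 := by linear_combination h4
    rcases mul_eq_zero.mp h5 with h | h
    · exact Or.inl h
    · exact Or.inr (by linarith)
  -- trace
  have htr : ∑ i, hYY.eigenvalues i = 2 * c := by
    have h := congrArg Matrix.trace hYY.spectral_theorem
    rw [Unitary.conjStarAlgAut_apply, Matrix.trace_mul_cycle] at h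
    rw [show (star (hYY.eigenvectorUnitary : Matrix (Fin n) (Fin n) ℝ)) *
        (hYY.eigenvectorUnitary : Matrix (Fin n) (Fin n) ℝ) = 1 from
      Unitary.coe_star_mul_self _, Matrix.one_mul, Matrix.trace_diagonal] at h
    have htr2 : (Yᵀ * Y).trace = 2 * c := by
      rw [Matrix.trace]
      simp only [Matrix.diag_apply]
      rw [Finset.sum_congr rfl fun i _ => hM i i]
      rw [Finset.sum_add_distrib]
      have : ∀ i : Fin n, (n : ℝ) * s i * s i = (n:ℝ) * (s i)^2 := fun i => by ring
      rw [Finset.sum_congr rfl fun i _ => this i]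
      rw [← Finset.mul_sum, ← hσ]
      simp [Finset.card_univ, hc]
      ring
    rw [htr2] at h
    simpa using h.symm
  -- counting
  set T := Finset.univ.filter (fun i => hYY.eigenvalues i = c) with hT
  have hsplit : ∑ i, hYY.eigenvalues i = (T.card : ℝ) * c := by
    rw [← Finset.sum_filter_add_sum_filter_not Finset.univ
      (fun i => hYY.eigenvalues i = c)]
    rw [Finset.sum_congr rfl (fun i hi => (Finset.mem_filter.mp hi).2)]
    have hz : ∀ i ∈ Finset.univ.filter (fun i => ¬ hYY.eigenvalues i = c),
        hYY.eigenvalues i = 0 := by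
      intro i hi
      rcases key i with h | h
      · exact h
      · exact absurd h (Finset.mem_filter.mp hi).2
    rw [Finset.sum_congr rfl hz]
    simp [hT, mul_comm]
  have hcard : (T.card : ℝ) = 2 := by
    have := hsplit.symm.trans htr
    field_simp at this
    linarith
  -- final sum
  have hfin : ∑ i, Real.sqrt (hYY.eigenvalues i) = (T.card : ℝ) * Real.sqrt c := by
    rw [← Finset.sum_filter_add_sum_filter_not Finset.univ
      (fun i => hYY.eigenvalues i = c)]
    rw [Finset.sum_congr rfl (fun i hi => by rw [(Finset.mem_filter.mp hi).2])]
    have hz : ∀ i ∈ Finset.univ.filter (fun i => ¬ hYY.eigenvalues i = c),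
        Real.sqrt (hYY.eigenvalues i) = 0 := by
      intro i hi
      rcases key i with h | h
      · rw [h, Real.sqrt_zero]
      · exact absurd h (Finset.mem_filter.mp hi).2
    rw [Finset.sum_congr rfl hz]
    simp [hT, mul_comm]
  rw [hfin, hcard, hc, Real.sqrt_mul (by positivity)]
  ring
end

section
/- Let A be an n×n real skew-symmetric matrix whose singular values (in decreasing order with multiplicity) satisfy σ_k > σ_{k+1} for an even integer k = 2j. Then every best rank-k approximation of A in the Frobenius norm is also skew-symmetric. -/
open Matrix

lemma exists_onb {n : ℕ} (Z : Matrix (Fin n) (Fin n) ℝ) :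
    ∃ w : Fin Z.rank → (Fin n → ℝ),
      (∀ j j', w j ⬝ᵥ w j' = if j = j' then 1 else 0) ∧
      ∀ x ∈ LinearMap.range Z.mulVecLin, ∃ c : Fin Z.rank → ℝ, x = ∑ j, c j • w j := by
  let S : Submodule ℝ (EuclideanSpace ℝ (Fin n)) :=
    (LinearMap.range Z.mulVecLin).map (WithLp.linearEquiv 2 ℝ (Fin n → ℝ)).symm.toLinearMap
  have hfr : Module.finrank ℝ S = Z.rank := LinearEquiv.finrank_map_eq _ _
  let B : OrthonormalBasis (Fin Z.rank) ℝ S := (stdOrthonormalBasis ℝ S).reindex (finCongr hfr)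
  refine ⟨fun j => ((B j : EuclideanSpace ℝ (Fin n)) : Fin n → ℝ), ?_, ?_⟩
  · intro j j'
    have h := (orthonormal_iff_ite.mp B.orthonormal) j j'
    rw [Submodule.coe_inner, PiLp.inner_apply] at h
    rw [← h]
    simp [dotProduct]
    exact Finset.sum_congr rfl fun _ _ => mul_comm _ _
  · intro x hx
    have hx' : WithLp.toLp 2 x ∈ S := ⟨x, hx, rfl⟩
    refine ⟨fun j => B.repr ⟨_, hx'⟩ j, ?_⟩
    have h2 := congrArg (fun v => WithLp.ofLp (Subtype.val v)) (B.sum_repr ⟨_, hx'⟩)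
    simp only [Submodule.coe_sum, Submodule.coe_smul, WithLp.ofLp_sum, WithLp.ofLp_smul] at h2
    exact h2.symm

namespace BRK
variable {n r : ℕ}

def fsq (M : Matrix (Fin n) (Fin n) ℝ) : ℝ := ∑ i, ∑ j, (M i j) ^ 2

lemma frobNorm_eq (M : Matrix (Fin n) (Fin n) ℝ) : frobNorm M = Real.sqrt (fsq M) := rfl

lemma fsq_nonneg (M : Matrix (Fin n) (Fin n) ℝ) : 0 ≤ fsq M :=
  Finset.sum_nonneg fun _ _ => Finset.sum_nonneg fun _ _ => sq_nonneg _

lemma fsq_eq_trace (M : Matrix (Fin n) (Fin n) ℝ) : fsq M = trace (Mᵀ * M) := by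
  unfold fsq trace
  simp only [Matrix.mul_apply, Matrix.transpose_apply, Matrix.diag_apply]
  rw [Finset.sum_comm]
  congr 1; ext i; congr 1; ext j; ring

lemma fsq_eq_zero {M : Matrix (Fin n) (Fin n) ℝ} (h : fsq M = 0) : M = 0 := by
  ext i j
  have h1 : ∀ i ∈ (Finset.univ : Finset (Fin n)), (0:ℝ) ≤ ∑ j, (M i j)^2 :=
    fun _ _ => Finset.sum_nonneg fun _ _ => sq_nonneg _
  have := (Finset.sum_eq_zero_iff_of_nonneg h1).mp h i (Finset.mem_univ i)
  have := (Finset.sum_eq_zero_iff_of_nonneg (fun j _ => sq_nonneg (M i j))).mp this j (Finset.mem_univ j)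
  simpa using pow_eq_zero_iff (n := 2) (by norm_num) |>.mp this

lemma fsq_transpose (M : Matrix (Fin n) (Fin n) ℝ) : fsq Mᵀ = fsq M := by
  unfold fsq; rw [Finset.sum_comm]; rfl

lemma fsq_neg (M : Matrix (Fin n) (Fin n) ℝ) : fsq (-M) = fsq M := by
  unfold fsq; simp

lemma fsq_le_fsq {M N : Matrix (Fin n) (Fin n) ℝ} (h : frobNorm M ≤ frobNorm N) :
    fsq M ≤ fsq N := by
  rw [frobNorm_eq, frobNorm_eq] at h
  exact (Real.sqrt_le_sqrt_iff (fsq_nonneg N)).mp h |>.trans_eq rfl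

lemma fsq_add_of_orth {M N : Matrix (Fin n) (Fin n) ℝ} (h : trace (Mᵀ * N) = 0) :
    fsq (M + N) = fsq M + fsq N := by
  rw [fsq_eq_trace, fsq_eq_trace, fsq_eq_trace]
  have hNM : trace (Nᵀ * M) = 0 := by
    rw [← Matrix.trace_transpose, Matrix.transpose_mul, Matrix.transpose_transpose]
    exact h
  rw [Matrix.transpose_add, Matrix.add_mul, Matrix.mul_add, Matrix.mul_add]
  simp [Matrix.trace_add, h, hNM]

/-- matrix whose columns are the `w j` -/
def Wmat (w : Fin r → Fin n → ℝ) : Matrix (Fin n) (Fin r) ℝ := Matrix.of fun i j => w j i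

def Pmat (w : Fin r → Fin n → ℝ) : Matrix (Fin n) (Fin n) ℝ := Wmat w * (Wmat w)ᵀ

variable {w : Fin r → Fin n → ℝ}

lemma WtW (hw : ∀ j j', w j ⬝ᵥ w j' = if j = j' then 1 else 0) :
    (Wmat w)ᵀ * Wmat w = 1 := by
  ext j j'
  have := hw j j'
  simp only [Matrix.mul_apply, Matrix.transpose_apply, Wmat, Matrix.of_apply, Matrix.one_apply]
  rw [← this]; rfl

lemma Pmat_transpose : (Pmat w)ᵀ = Pmat w := by
  unfold Pmat; rw [Matrix.transpose_mul, Matrix.transpose_transpose]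

lemma Pmat_idem (hw : ∀ j j', w j ⬝ᵥ w j' = if j = j' then 1 else 0) :
    Pmat w * Pmat w = Pmat w := by
  unfold Pmat
  rw [Matrix.mul_assoc, ← Matrix.mul_assoc (Wmat w)ᵀ, WtW hw, Matrix.one_mul]

lemma Pmat_mulVec (x : Fin n → ℝ) : Pmat w *ᵥ x = ∑ j, (w j ⬝ᵥ x) • w j := by
  unfold Pmat
  rw [← Matrix.mulVec_mulVec]
  ext i
  simp only [Matrix.mulVec, Wmat, dotProduct, Matrix.transpose_apply, Matrix.of_apply,
    Finset.sum_apply, Pi.smul_apply, smul_eq_mul]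
  congr 1; ext j; ring

lemma trace_Pmat_mul (H : Matrix (Fin n) (Fin n) ℝ) :
    trace (Pmat w * H) = ∑ j, w j ⬝ᵥ (H *ᵥ w j) := by
  unfold Pmat
  rw [Matrix.mul_assoc, Matrix.trace_mul_comm]
  unfold trace
  refine Finset.sum_congr rfl fun j _ => ?_
  simp only [Matrix.mul_apply, Matrix.transpose_apply, Wmat, Matrix.of_apply, Matrix.diag_apply,
    Matrix.mulVec, dotProduct, Finset.sum_mul, Finset.mul_sum, mul_assoc]
  exact Finset.sum_comm


/-- Core orthogonal decomposition of the approximation error. -/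
lemma core (A Z : Matrix (Fin n) (Fin n) ℝ)
    (hcomm : A * Aᵀ = Aᵀ * A)
    (hw : ∀ j j', w j ⬝ᵥ w j' = if j = j' then 1 else 0)
    (hPZ : Pmat w * Z = Z) :
    fsq (A - Z) = fsq (Pmat w * A - Z) + (trace (Aᵀ * A) - trace (Pmat w * (Aᵀ * A))) := by
  set P := Pmat w with hP
  have hPt : Pᵀ = P := Pmat_transpose
  have hPP : P * P = P := Pmat_idem hw
  have hsplit : A - Z = (P * A - Z) + (A - P * A) := by abel
  have horth : trace ((P * A - Z)ᵀ * (A - P * A)) = 0 := by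
    have hZtP : Zᵀ * P = Zᵀ := by
      have := congrArg Matrix.transpose hPZ
      rw [Matrix.transpose_mul, hPt] at this
      exact this
    rw [Matrix.transpose_sub, Matrix.transpose_mul, hPt]
    rw [Matrix.sub_mul, Matrix.mul_sub, Matrix.mul_sub]
    have h1 : Aᵀ * P * (P * A) = Aᵀ * P * A := by
      simp only [← Matrix.mul_assoc]
      rw [Matrix.mul_assoc Aᵀ P P, hPP]
    have h2 : Zᵀ * (P * A) = Zᵀ * A := by rw [← Matrix.mul_assoc, hZtP]
    rw [h1, h2]
    simp [Matrix.mul_assoc]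
  have hpyth := fsq_add_of_orth horth
  rw [← hsplit] at hpyth
  have hres : fsq (A - P * A) = trace (Aᵀ * A) - trace (P * (Aᵀ * A)) := by
    rw [fsq_eq_trace, Matrix.transpose_sub, Matrix.transpose_mul, hPt]
    rw [Matrix.sub_mul, Matrix.mul_sub, Matrix.mul_sub]
    have h1 : Aᵀ * P * (P * A) = Aᵀ * (P * A) := by
      simp only [← Matrix.mul_assoc]
      rw [Matrix.mul_assoc Aᵀ P P, hPP]
    rw [h1]
    have h2 : (Aᵀ * (P * A)).trace = (P * (Aᵀ * A)).trace := by
      rw [← Matrix.mul_assoc, Matrix.trace_mul_comm, ← Matrix.mul_assoc, hcomm,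
        Matrix.trace_mul_comm]
    simp only [Matrix.trace_sub]
    rw [Matrix.mul_assoc Aᵀ P A, h2]
    ring
  rw [hpyth, hres]


lemma dot_sum_right {m : ℕ} (v : Fin n → ℝ) (f : Fin m → Fin n → ℝ) :
    v ⬝ᵥ (∑ j, f j) = ∑ j, v ⬝ᵥ f j := by
  simp only [dotProduct, Finset.sum_apply, Finset.mul_sum]
  exact Finset.sum_comm

lemma mulVec_sum' {m : ℕ} (M : Matrix (Fin n) (Fin n) ℝ) (f : Fin m → Fin n → ℝ) :
    M *ᵥ (∑ j, f j) = ∑ j, M *ᵥ f j := by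
  ext i
  simp only [Matrix.mulVec, Finset.sum_apply]
  exact dot_sum_right _ _

section Eigen
variable (A : Matrix (Fin n) (Fin n) ℝ) (hAA : (Aᵀ * A).IsHermitian)

noncomputable def uvec (i : Fin n) : Fin n → ℝ := ⇑(hAA.eigenvectorBasis i)

lemma uvec_orth (i j : Fin n) :
    uvec A hAA i ⬝ᵥ uvec A hAA j = if i = j then 1 else 0 := by
  have h := (orthonormal_iff_ite.mp hAA.eigenvectorBasis.orthonormal) i j
  rw [← h, PiLp.inner_apply]
  simp [uvec, dotProduct]
  exact Finset.sum_congr rfl fun _ _ => mul_comm _ _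

lemma uvec_eig (i : Fin n) :
    (Aᵀ * A) *ᵥ uvec A hAA i = hAA.eigenvalues i • uvec A hAA i :=
  hAA.mulVec_eigenvectorBasis i

lemma uvec_expand (x : Fin n → ℝ) :
    ∑ i, (uvec A hAA i ⬝ᵥ x) • uvec A hAA i = x := by
  have h := hAA.eigenvectorBasis.sum_repr (WithLp.toLp 2 x)
  have h2 : ∀ i, hAA.eigenvectorBasis.repr (WithLp.toLp 2 x) i
      = uvec A hAA i ⬝ᵥ x := by
    intro i
    rw [OrthonormalBasis.repr_apply_apply, PiLp.inner_apply]
    simp [uvec, dotProduct]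
    exact Finset.sum_congr rfl fun _ _ => mul_comm _ _
  calc ∑ i, (uvec A hAA i ⬝ᵥ x) • uvec A hAA i
      = ∑ i, hAA.eigenvectorBasis.repr (WithLp.toLp 2 x) i • uvec A hAA i := by
        refine Finset.sum_congr rfl fun i _ => ?_; rw [h2]
    _ = x := by simpa [uvec] using congrArg WithLp.ofLp h

lemma parseval (v : Fin n → ℝ) :
    ∑ i, (uvec A hAA i ⬝ᵥ v) ^ 2 = v ⬝ᵥ v := by
  have h : v ⬝ᵥ v = v ⬝ᵥ (∑ i, (uvec A hAA i ⬝ᵥ v) • uvec A hAA i) :=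
    congrArg (fun y => v ⬝ᵥ y) (uvec_expand A hAA v).symm
  rw [h, dot_sum_right]
  refine Finset.sum_congr rfl fun i _ => ?_
  rw [dotProduct_smul, dotProduct_comm v]
  simp [sq, smul_eq_mul]

lemma qform (v : Fin n → ℝ) :
    v ⬝ᵥ ((Aᵀ * A) *ᵥ v) = ∑ i, hAA.eigenvalues i * (uvec A hAA i ⬝ᵥ v) ^ 2 := by
  have h : v ⬝ᵥ ((Aᵀ * A) *ᵥ v)
      = v ⬝ᵥ ((Aᵀ * A) *ᵥ (∑ i, (uvec A hAA i ⬝ᵥ v) • uvec A hAA i)) :=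
    congrArg (fun y => v ⬝ᵥ ((Aᵀ * A) *ᵥ y)) (uvec_expand A hAA v).symm
  rw [h, mulVec_sum', dot_sum_right]
  refine Finset.sum_congr rfl fun i _ => ?_
  rw [Matrix.mulVec_smul, uvec_eig, dotProduct_smul, dotProduct_smul, dotProduct_comm v]
  simp [sq, smul_eq_mul]
  ring

end Eigen


lemma dot_sum_left {m : ℕ} (v : Fin n → ℝ) (f : Fin m → Fin n → ℝ) :
    (∑ j, f j) ⬝ᵥ v = ∑ j, f j ⬝ᵥ v := by
  rw [dotProduct_comm, dot_sum_right]
  exact Finset.sum_congr rfl fun j _ => dotProduct_comm _ _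

lemma dot_self_nonneg (v : Fin n → ℝ) : 0 ≤ v ⬝ᵥ v :=
  Finset.sum_nonneg fun i _ => mul_self_nonneg _

section Bessel
variable {w : Fin r → Fin n → ℝ}

lemma wdotS (hw : ∀ j j', w j ⬝ᵥ w j' = if j = j' then 1 else 0)
    (c : Fin r → ℝ) (j : Fin r) : w j ⬝ᵥ (∑ j', c j' • w j') = c j := by
  rw [dot_sum_right]
  simp only [dotProduct_smul, smul_eq_mul, hw]
  simp

lemma proj_dot (hw : ∀ j j', w j ⬝ᵥ w j' = if j = j' then 1 else 0)
    (x : Fin n → ℝ) :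
    (x - ∑ j, (w j ⬝ᵥ x) • w j) ⬝ᵥ (x - ∑ j, (w j ⬝ᵥ x) • w j)
      = x ⬝ᵥ x - ∑ j, (w j ⬝ᵥ x) ^ 2 := by
  set c : Fin r → ℝ := fun j => w j ⬝ᵥ x with hc
  set S : Fin n → ℝ := ∑ j, c j • w j with hS
  have hxS : x ⬝ᵥ S = ∑ j, c j ^ 2 := by
    rw [hS, dot_sum_right]
    refine Finset.sum_congr rfl fun j _ => ?_
    rw [dotProduct_smul, dotProduct_comm x]
    simp [sq, smul_eq_mul, hc]
  have hSx : S ⬝ᵥ x = ∑ j, c j ^ 2 := by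
    rw [hS, dot_sum_left]
    refine Finset.sum_congr rfl fun j _ => ?_
    rw [smul_dotProduct]
    simp [sq, smul_eq_mul, hc]
  have hSS : S ⬝ᵥ S = ∑ j, c j ^ 2 := by
    conv_lhs => rw [hS, dot_sum_left]
    refine Finset.sum_congr rfl fun j _ => ?_
    rw [smul_dotProduct, wdotS hw]
    simp [sq, smul_eq_mul]
  rw [sub_dotProduct, dotProduct_sub, dotProduct_sub, hxS, hSx, hSS]
  ring

lemma bessel (hw : ∀ j j', w j ⬝ᵥ w j' = if j = j' then 1 else 0)
    (x : Fin n → ℝ) (hx : x ⬝ᵥ x = 1) : ∑ j, (w j ⬝ᵥ x) ^ 2 ≤ 1 := by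
  have h0 := dot_self_nonneg (x - ∑ j, (w j ⬝ᵥ x) • w j)
  rw [proj_dot hw, hx] at h0
  linarith

end Bessel

section KyFanSec

def Tk (n k : ℕ) : Finset (Fin n) := Finset.univ.filter (fun i => (i:ℕ) < k)

lemma mem_Tk {k : ℕ} {i : Fin n} : i ∈ Tk n k ↔ (i:ℕ) < k := by simp [Tk]

lemma Tk_eq_map {k : ℕ} (hkn : k ≤ n) :
    Tk n k = Finset.map (Fin.castLEEmb hkn) Finset.univ := by
  ext i
  simp only [mem_Tk, Finset.mem_map, Finset.mem_univ, true_and]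
  constructor
  · intro h; exact ⟨⟨i, h⟩, by simp [Fin.castLEEmb, Fin.castLE, Fin.ext_iff]⟩
  · rintro ⟨j, rfl⟩; simpa using j.2

lemma Tk_card {k : ℕ} (hkn : k ≤ n) : (Tk n k).card = k := by
  rw [Tk_eq_map hkn, Finset.card_map, Finset.card_univ, Fintype.card_fin]

lemma Tk_sum {k : ℕ} (hkn : k ≤ n) (f : Fin n → ℝ) :
    ∑ i ∈ Tk n k, f i = ∑ j : Fin k, f (Fin.castLE hkn j) := by
  rw [Tk_eq_map hkn, Finset.sum_map]
  rfl

lemma kyfan {k r : ℕ} (hkn : k < n) (hk0 : 0 < k) (hrk : r ≤ k)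
    (μ : Fin n → ℝ) (hμ0 : ∀ i, 0 ≤ μ i) (hmono : ∀ i j : Fin n, i ≤ j → μ j ≤ μ i)
    (hgap : μ ⟨k, hkn⟩ < μ ⟨k - 1, Nat.lt_of_le_of_lt (Nat.sub_le k 1) hkn⟩)
    (s : Fin n → ℝ) (hs0 : ∀ i, 0 ≤ s i) (hs1 : ∀ i, s i ≤ 1) (hsum : ∑ i, s i = (r:ℝ))
    (hle : ∑ i ∈ Tk n k, μ i ≤ ∑ i, μ i * s i) :
    (∀ i : Fin n, (i:ℕ) < k → s i = 1) ∧ (∀ i : Fin n, k ≤ (i:ℕ) → s i = 0) := by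
  set c : ℝ := μ ⟨k - 1, by omega⟩ with hcdef
  have hc0 : 0 < c := lt_of_le_of_lt (hμ0 ⟨k, hkn⟩) hgap
  have hcard : ∑ _i ∈ Tk n k, (1:ℝ) = (k:ℝ) := by
    rw [Finset.sum_const, Tk_card hkn.le]; simp
  have l1 : ∑ i ∈ Tk n k, (μ i - c) * (1 - s i)
      = ((∑ i ∈ Tk n k, μ i) - (∑ i ∈ Tk n k, μ i * s i))
        + (c * (∑ i ∈ Tk n k, s i) - c * (k:ℝ)) := by
    calc ∑ i ∈ Tk n k, (μ i - c) * (1 - s i)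
        = ∑ i ∈ Tk n k, ((μ i - μ i * s i) + (c * s i - c * 1)) :=
          Finset.sum_congr rfl (fun i _ => by ring)
      _ = _ := by
          rw [Finset.sum_add_distrib, Finset.sum_sub_distrib, Finset.sum_sub_distrib,
            ← Finset.mul_sum, ← Finset.mul_sum, hcard]
  have l2 : ∑ i ∈ (Tk n k)ᶜ, (c - μ i) * s i
      = c * (∑ i ∈ (Tk n k)ᶜ, s i) - (∑ i ∈ (Tk n k)ᶜ, μ i * s i) := by
    calc ∑ i ∈ (Tk n k)ᶜ, (c - μ i) * s i
        = ∑ i ∈ (Tk n k)ᶜ, (c * s i - μ i * s i) :=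
          Finset.sum_congr rfl (fun i _ => by ring)
      _ = _ := by rw [Finset.sum_sub_distrib, ← Finset.mul_sum]
  have hsplit2 : ∑ i ∈ Tk n k, μ i * s i + ∑ i ∈ (Tk n k)ᶜ, μ i * s i = ∑ i, μ i * s i :=
    Finset.sum_add_sum_compl _ _
  have hsplit3 : (∑ i ∈ Tk n k, s i) + (∑ i ∈ (Tk n k)ᶜ, s i) = (r:ℝ) := by
    rw [Finset.sum_add_sum_compl, hsum]
  have hE : (∑ i ∈ Tk n k, (μ i - c) * (1 - s i)) + (∑ i ∈ (Tk n k)ᶜ, (c - μ i) * s i)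
      + c * ((k:ℝ) - (r:ℝ)) = (∑ i ∈ Tk n k, μ i) - ∑ i, μ i * s i := by
    rw [l1, l2, ← hsplit2]
    have : (∑ i ∈ (Tk n k)ᶜ, s i) = (r:ℝ) - ∑ i ∈ Tk n k, s i := by linarith
    rw [this]; ring
  -- nonnegativity of the three parts
  have h1 : ∀ i ∈ Tk n k, 0 ≤ (μ i - c) * (1 - s i) := by
    intro i hi
    have hik : (i:ℕ) < k := mem_Tk.mp hi
    have hile : i ≤ ⟨k - 1, by omega⟩ := by rw [Fin.le_def]; simp; omega
    have := hmono i ⟨k - 1, by omega⟩ hile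
    have := hs1 i
    nlinarith
  have h2 : ∀ i ∈ (Tk n k)ᶜ, 0 ≤ (c - μ i) * s i := by
    intro i hi
    have hik : k ≤ (i:ℕ) := by
      have := Finset.mem_compl.mp hi
      rw [mem_Tk] at this; omega
    have hle2 : (⟨k, hkn⟩ : Fin n) ≤ i := by rw [Fin.le_def]; simpa
    have := hmono ⟨k, hkn⟩ i hle2
    have := hs0 i
    nlinarith
  have h3 : 0 ≤ c * ((k:ℝ) - (r:ℝ)) := by
    have : (r:ℝ) ≤ (k:ℝ) := by exact_mod_cast hrk
    nlinarith
  have h1s : 0 ≤ ∑ i ∈ Tk n k, (μ i - c) * (1 - s i) := Finset.sum_nonneg h1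
  have h2s : 0 ≤ ∑ i ∈ (Tk n k)ᶜ, (c - μ i) * s i := Finset.sum_nonneg h2
  -- all three parts vanish
  have h2z : ∑ i ∈ (Tk n k)ᶜ, (c - μ i) * s i = 0 := by linarith
  have h3z : c * ((k:ℝ) - (r:ℝ)) = 0 := by linarith
  -- s vanishes outside Tk
  have hout : ∀ i : Fin n, k ≤ (i:ℕ) → s i = 0 := by
    intro i hik
    have hi : i ∈ (Tk n k)ᶜ := by rw [Finset.mem_compl, mem_Tk]; omega
    have := (Finset.sum_eq_zero_iff_of_nonneg h2).mp h2z i hi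
    have hlt : μ i < c := by
      have hle2 : (⟨k, hkn⟩ : Fin n) ≤ i := by rw [Fin.le_def]; simpa
      have := hmono ⟨k, hkn⟩ i hle2
      linarith
    rcases mul_eq_zero.mp this with h | h
    · linarith
    · exact h
  -- r = k
  have hrk' : (k:ℝ) = (r:ℝ) := by
    rcases mul_eq_zero.mp h3z with h | h
    · linarith
    · linarith
  -- sum of s over Tk equals k
  have houts : ∑ i ∈ (Tk n k)ᶜ, s i = 0 :=
    Finset.sum_eq_zero fun i hi => hout i (by have := Finset.mem_compl.mp hi; rw [mem_Tk] at this; omega)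
  have hTks : ∑ i ∈ Tk n k, s i = (k:ℝ) := by
    rw [hrk']; linarith
  have h4 : ∑ i ∈ Tk n k, (1 - s i) = 0 := by
    rw [Finset.sum_sub_distrib, hcard, hTks]; ring
  have hin : ∀ i : Fin n, (i:ℕ) < k → s i = 1 := by
    intro i hik
    have hi : i ∈ Tk n k := mem_Tk.mpr hik
    have := (Finset.sum_eq_zero_iff_of_nonneg (fun i _ => by have := hs1 i; linarith)).mp h4 i hi
    linarith
  exact ⟨hin, hout⟩

end KyFanSec


lemma rank_neg (M : Matrix (Fin n) (Fin n) ℝ) : (-M).rank = M.rank := by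
  have h1 : ∀ N : Matrix (Fin n) (Fin n) ℝ, (-N).rank ≤ N.rank := by
    intro N
    have : -N = (-1 : Matrix (Fin n) (Fin n) ℝ) * N := by simp
    rw [this]
    exact Matrix.rank_mul_le_right _ _
  refine le_antisymm (h1 M) ?_
  have := h1 (-M)
  rwa [neg_neg] at this

section Main
variable {k : ℕ} (A : Matrix (Fin n) (Fin n) ℝ) (hAA : (Aᵀ * A).IsHermitian)

/-- Projection fixes vectors with `t = 1` and kills vectors with `t = 0`. -/
lemma Pmat_fix {w : Fin r → Fin n → ℝ}
    (hw : ∀ j j', w j ⬝ᵥ w j' = if j = j' then 1 else 0)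
    (x : Fin n → ℝ) (hx : x ⬝ᵥ x = 1) (ht : ∑ j, (w j ⬝ᵥ x) ^ 2 = 1) :
    Pmat w *ᵥ x = x := by
  have h := proj_dot hw x
  rw [hx, ht, sub_self] at h
  have h2 := dotProduct_self_eq_zero.mp h
  have h3 : ∑ j, (w j ⬝ᵥ x) • w j = x := by
    exact (sub_eq_zero.mp h2).symm
  rw [Pmat_mulVec]
  exact h3

lemma Pmat_kill {w : Fin r → Fin n → ℝ}
    (x : Fin n → ℝ) (ht : ∑ j, (w j ⬝ᵥ x) ^ 2 = 0) :
    Pmat w *ᵥ x = 0 := by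
  rw [Pmat_mulVec]
  refine Finset.sum_eq_zero fun j _ => ?_
  have := (Finset.sum_eq_zero_iff_of_nonneg (fun j _ => sq_nonneg (w j ⬝ᵥ x))).mp ht j
    (Finset.mem_univ j)
  have hz : w j ⬝ᵥ x = 0 := by
    have := pow_eq_zero_iff (n := 2) (by norm_num) |>.mp this
    exact this
  rw [hz, zero_smul]


lemma minimizer_eq (hA : Aᵀ = -A) {k : ℕ} (hk0 : 0 < k) (hkn : k < n)
    (g : Equiv.Perm (Fin n))
    (hμ0 : ∀ i, 0 ≤ hAA.eigenvalues i)
    (hμmono : ∀ i j : Fin n, i ≤ j → hAA.eigenvalues (g j) ≤ hAA.eigenvalues (g i))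
    (hμgap : hAA.eigenvalues (g ⟨k, hkn⟩) < hAA.eigenvalues (g ⟨k - 1, Nat.lt_of_le_of_lt (Nat.sub_le k 1) hkn⟩))
    (Z : Matrix (Fin n) (Fin n) ℝ) (hZr : Z.rank ≤ k)
    (hZbest : ∀ W : Matrix (Fin n) (Fin n) ℝ, W.rank ≤ k →
      frobNorm (A - Z) ≤ frobNorm (A - W)) :
    Z = Pmat (fun j : Fin k => uvec A hAA (g (Fin.castLE (le_of_lt hkn) j))) * A := by
  have hcomm : A * Aᵀ = Aᵀ * A := by rw [hA]; simp [Matrix.mul_neg, Matrix.neg_mul]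
  set μ : Fin n → ℝ := fun i => hAA.eigenvalues (g i) with hμdef
  set u : Fin n → Fin n → ℝ := uvec A hAA with hudef
  set w0 : Fin k → Fin n → ℝ := fun j => uvec A hAA (g (Fin.castLE (le_of_lt hkn) j)) with hw0def
  have hw0 : ∀ j j', w0 j ⬝ᵥ w0 j' = if j = j' then 1 else 0 := by
    intro j j'
    rw [hw0def]
    simp only [uvec_orth]
    by_cases h : j = j'
    · simp [h]
    · have : g (Fin.castLE (le_of_lt hkn) j) ≠ g (Fin.castLE (le_of_lt hkn) j') := by
        simp only [ne_eq, EmbeddingLike.apply_eq_iff_eq]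
        intro hc
        exact h (Fin.castLE_injective _ hc)
      simp [h, this]
  set Z₀ : Matrix (Fin n) (Fin n) ℝ := Pmat w0 * A with hZ₀
  have hrank0 : Z₀.rank ≤ k := by
    calc Z₀.rank ≤ (Pmat w0).rank := Matrix.rank_mul_le_left _ _
      _ ≤ (Wmat w0).rank := Matrix.rank_mul_le_left _ _
      _ ≤ Fintype.card (Fin k) := Matrix.rank_le_card_width _
      _ = k := Fintype.card_fin k
  have hPZ₀ : Pmat w0 * Z₀ = Z₀ := by rw [hZ₀, ← Matrix.mul_assoc, Pmat_idem hw0]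
  have hfsq₀ : fsq (A - Z₀) = trace (Aᵀ * A) - trace (Pmat w0 * (Aᵀ * A)) := by
    have h := core A Z₀ hcomm hw0 hPZ₀
    have hz : Pmat w0 * A - Z₀ = 0 := sub_self _
    rw [hz] at h
    have : fsq (0 : Matrix (Fin n) (Fin n) ℝ) = 0 := by unfold fsq; simp
    rw [this] at h
    linarith
  have htr₀ : trace (Pmat w0 * (Aᵀ * A)) = ∑ i ∈ Tk n k, μ i := by
    rw [trace_Pmat_mul]
    rw [Tk_sum (le_of_lt hkn) μ]
    refine Finset.sum_congr rfl fun j _ => ?_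
    rw [hw0def]
    rw [qform A hAA]
    simp only [uvec_orth]
    rw [hμdef]
    simp
  -- data for the arbitrary minimizer
  obtain ⟨w, hw, hspan⟩ := exists_onb Z
  have hfix : ∀ x ∈ LinearMap.range Z.mulVecLin, Pmat w *ᵥ x = x := by
    rintro x hx
    obtain ⟨c, rfl⟩ := hspan x hx
    rw [Pmat_mulVec]
    exact Finset.sum_congr rfl fun j _ => by rw [wdotS hw]
  have hPZ : Pmat w * Z = Z := by
    have hcol : ∀ j, Pmat w *ᵥ (fun i => Z i j) = fun i => Z i j := by
      intro j
      refine hfix _ ⟨Pi.single j 1, ?_⟩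
      rw [Matrix.mulVecLin_apply, Matrix.mulVec_single]
      simp
      rfl
    ext i j
    have := congrFun (hcol j) i
    simpa [Matrix.mul_apply, Matrix.mulVec, dotProduct] using this
  have hcore := core A Z hcomm hw hPZ
  set t : Fin n → ℝ := fun i => ∑ j, (u i ⬝ᵥ w j) ^ 2 with htdef
  have htrZ : trace (Pmat w * (Aᵀ * A)) = ∑ i, hAA.eigenvalues i * t i := by
    rw [trace_Pmat_mul]
    have h1 : ∀ j, w j ⬝ᵥ ((Aᵀ * A) *ᵥ w j) = ∑ i, hAA.eigenvalues i * (u i ⬝ᵥ w j)^2 :=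
      fun j => qform A hAA (w j)
    rw [Finset.sum_congr rfl fun j _ => h1 j]
    rw [Finset.sum_comm]
    refine Finset.sum_congr rfl fun i _ => ?_
    rw [htdef, Finset.mul_sum]
  set s : Fin n → ℝ := fun i => t (g i) with hsdef
  have huu : ∀ i, u i ⬝ᵥ u i = 1 := by
    intro i; rw [hudef, uvec_orth]; simp
  have hs0 : ∀ i, 0 ≤ s i := fun i => Finset.sum_nonneg fun j _ => sq_nonneg _
  have hs1 : ∀ i, s i ≤ 1 := by
    intro i
    rw [hsdef, htdef]
    have h := bessel hw (u (g i)) (huu (g i))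
    calc ∑ j, (u (g i) ⬝ᵥ w j) ^ 2 = ∑ j, (w j ⬝ᵥ u (g i)) ^ 2 := by
          refine Finset.sum_congr rfl fun j _ => by rw [dotProduct_comm]
      _ ≤ 1 := h
  have hsum : ∑ i, s i = (Z.rank : ℝ) := by
    rw [hsdef]
    rw [Equiv.sum_comp g t]
    rw [htdef]
    rw [Finset.sum_comm]
    have : ∀ j, ∑ i, (u i ⬝ᵥ w j) ^ 2 = 1 := by
      intro j
      rw [hudef]
      rw [parseval A hAA (w j), hw]
      simp
    rw [Finset.sum_congr rfl fun j _ => this j]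
    simp
  have hmin : fsq (A - Z) ≤ fsq (A - Z₀) := fsq_le_fsq (hZbest Z₀ hrank0)
  have hμs : ∑ i, μ i * s i = ∑ i, hAA.eigenvalues i * t i := by
    simp only [hμdef, hsdef]
    exact Equiv.sum_comp g (fun i => hAA.eigenvalues i * t i)
  have hfsqnn : 0 ≤ fsq (Pmat w * A - Z) := fsq_nonneg _
  have hle : ∑ i ∈ Tk n k, μ i ≤ ∑ i, μ i * s i := by
    rw [hμs]
    rw [hfsq₀, htr₀] at hmin
    rw [hcore, htrZ] at hmin
    linarith
  obtain ⟨hin, hout⟩ := kyfan hkn hk0 hZr μ (fun i => hμ0 _) hμmono hμgap s hs0 hs1 hsum hle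
  -- the sums are equal, so the residual vanishes
  have hsum_eq : ∑ i, μ i * s i = ∑ i ∈ Tk n k, μ i := by
    rw [← Finset.sum_add_sum_compl (Tk n k) (fun i => μ i * s i)]
    have e1 : ∑ i ∈ Tk n k, μ i * s i = ∑ i ∈ Tk n k, μ i :=
      Finset.sum_congr rfl fun i hi => by rw [hin i (mem_Tk.mp hi), mul_one]
    have e2 : ∑ i ∈ (Tk n k)ᶜ, μ i * s i = 0 :=
      Finset.sum_eq_zero fun i hi => by
        rw [hout i (by have := Finset.mem_compl.mp hi; rw [mem_Tk] at this; omega), mul_zero]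
    rw [e1, e2, add_zero]
  have hres : fsq (Pmat w * A - Z) = 0 := by
    rw [hfsq₀, htr₀] at hmin
    rw [hcore, htrZ, ← hμs, hsum_eq] at hmin
    linarith
  have hZP : Z = Pmat w * A := by
    have := fsq_eq_zero hres
    have := sub_eq_zero.mp this
    exact this.symm
  -- identify the two projections on the eigenbasis
  have hPu : ∀ i : Fin n, Pmat w *ᵥ u (g i) = if (i:ℕ) < k then u (g i) else 0 := by
    intro i
    by_cases h : (i:ℕ) < k
    · rw [if_pos h]
      refine Pmat_fix hw _ (huu (g i)) ?_
      have := hin i h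
      rw [hsdef, htdef] at this
      calc ∑ j, (w j ⬝ᵥ u (g i)) ^ 2 = ∑ j, (u (g i) ⬝ᵥ w j) ^ 2 := by
            refine Finset.sum_congr rfl fun j _ => by rw [dotProduct_comm]
        _ = 1 := this
    · rw [if_neg h]
      refine Pmat_kill _ ?_
      have := hout i (by omega)
      rw [hsdef, htdef] at this
      calc ∑ j, (w j ⬝ᵥ u (g i)) ^ 2 = ∑ j, (u (g i) ⬝ᵥ w j) ^ 2 := by
            refine Finset.sum_congr rfl fun j _ => by rw [dotProduct_comm]
        _ = 0 := this
  have hPu0 : ∀ i : Fin n, Pmat w0 *ᵥ u (g i) = if (i:ℕ) < k then u (g i) else 0 := by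
    intro i
    rw [Pmat_mulVec]
    have hterm : ∀ j : Fin k, (w0 j ⬝ᵥ u (g i)) • w0 j
        = if Fin.castLE (le_of_lt hkn) j = i then u (g i) else 0 := by
      intro j
      rw [hw0def, hudef, uvec_orth]
      by_cases h : Fin.castLE (le_of_lt hkn) j = i
      · have : g (Fin.castLE (le_of_lt hkn) j) = g i := by rw [h]
        simp [this, h]
      · have : g (Fin.castLE (le_of_lt hkn) j) ≠ g i := by
          simpa using h
        simp [this, h]
    rw [Finset.sum_congr rfl fun j _ => hterm j]
    by_cases h : (i:ℕ) < k
    · rw [if_pos h]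
      have hci : Fin.castLE (le_of_lt hkn) (⟨(i:ℕ), h⟩ : Fin k) = i := rfl
      have : ∀ j : Fin k, (Fin.castLE (le_of_lt hkn) j = i) ↔ (j = ⟨(i:ℕ), h⟩) := by
        intro j
        constructor
        · intro hc
          apply Fin.castLE_injective (le_of_lt hkn)
          rw [hci, hc]
        · intro hc; subst hc; exact hci
      rw [Finset.sum_congr rfl fun j _ => by rw [if_congr (this j) rfl rfl]]
      rw [Finset.sum_ite_eq' Finset.univ (⟨(i:ℕ), h⟩ : Fin k) (fun _ => u (g i))]
      simp
    · rw [if_neg h]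
      refine Finset.sum_eq_zero fun j _ => ?_
      rw [if_neg]
      intro hc
      have : (j : ℕ) = (i : ℕ) := congrArg Fin.val hc
      omega
  have hPP : Pmat w = Pmat w0 := by
    have hvec : ∀ x : Fin n → ℝ, Pmat w *ᵥ x = Pmat w0 *ᵥ x := by
      intro x
      have hx : x = ∑ i, (u (g i) ⬝ᵥ x) • u (g i) := by
        have h2 := Equiv.sum_comp g (fun i => (u i ⬝ᵥ x) • u i)
        rw [h2]
        exact (uvec_expand A hAA x).symm
      rw [congrArg (fun y => Pmat w *ᵥ y) hx, congrArg (fun y => Pmat w0 *ᵥ y) hx]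
      rw [mulVec_sum', mulVec_sum']
      refine Finset.sum_congr rfl fun i _ => ?_
      rw [Matrix.mulVec_smul, Matrix.mulVec_smul, hPu, hPu0]
    ext i j
    have := congrFun (hvec (Pi.single j 1)) i
    simpa using this
  rw [hZP, hPP]

end Main

end BRK

/-- If `A` is skew-symmetric and its decreasingly-ordered singular values satisfy
`σ_k > σ_{k+1}` for an even `k`, then every best rank-`k` Frobenius-norm
approximation of `A` is skew-symmetric.  The singular values are
`σ i = √(eigenvalues of AᵀA)`, enumerated in decreasing order via a
permutation `g`.  (Indices below are 0-based: `σ ⟨k-1⟩` is the `k`-th largest.) -/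
theorem best_rank_k_approx_skew (n k : ℕ) (A : Matrix (Fin n) (Fin n) ℝ)
    (hA : Aᵀ = -A) (hAA : (Aᵀ * A).IsHermitian)
    (hk : Even k) (hk0 : 0 < k) (hkn : k < n)
    (g : Equiv.Perm (Fin n)) (σ : Fin n → ℝ)
    (hσ : σ = fun i => Real.sqrt (hAA.eigenvalues (g i)))
    (hmono : ∀ i j : Fin n, i ≤ j → σ j ≤ σ i)
    (hsep : σ ⟨k, hkn⟩ < σ ⟨k - 1, by omega⟩)
    (X : Matrix (Fin n) (Fin n) ℝ) (hXr : X.rank ≤ k)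
    (hXbest : ∀ Z : Matrix (Fin n) (Fin n) ℝ, Z.rank ≤ k →
      frobNorm (A - X) ≤ frobNorm (A - Z)) :
    Xᵀ = -X := by
  have hPSD : (Aᵀ * A).PosSemidef := by
    have h := Matrix.posSemidef_conjTranspose_mul_self A
    have hct : Aᴴ = Aᵀ := rfl
    rwa [hct] at h
  have hμ0 : ∀ i, 0 ≤ hAA.eigenvalues i := fun i => hPSD.eigenvalues_nonneg i
  have hμmono : ∀ i j : Fin n, i ≤ j → hAA.eigenvalues (g j) ≤ hAA.eigenvalues (g i) := by
    intro i j hij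
    have h := hmono i j hij
    rw [hσ] at h
    simp only at h
    nlinarith [Real.sq_sqrt (hμ0 (g j)), Real.sq_sqrt (hμ0 (g i)),
      Real.sqrt_nonneg (hAA.eigenvalues (g j)), Real.sqrt_nonneg (hAA.eigenvalues (g i))]
  have hμgap : hAA.eigenvalues (g ⟨k, hkn⟩) < hAA.eigenvalues (g ⟨k - 1, by omega⟩) := by
    have h := hsep
    rw [hσ] at h
    simp only at h
    nlinarith [Real.sq_sqrt (hμ0 (g ⟨k, hkn⟩)), Real.sq_sqrt (hμ0 (g ⟨k - 1, by omega⟩)),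
      Real.sqrt_nonneg (hAA.eigenvalues (g ⟨k, hkn⟩)),
      Real.sqrt_nonneg (hAA.eigenvalues (g ⟨k - 1, by omega⟩))]
  set Y : Matrix (Fin n) (Fin n) ℝ := -Xᵀ with hY
  have hYr : Y.rank ≤ k := by
    rw [hY, BRK.rank_neg, Matrix.rank_transpose]
    exact hXr
  have hfq : frobNorm (A - Y) = frobNorm (A - X) := by
    have h1 : A - Y = A + Xᵀ := by rw [hY, sub_neg_eq_add]
    have h2 : (A + Xᵀ)ᵀ = -(A - X) := by
      rw [Matrix.transpose_add, hA, Matrix.transpose_transpose]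
      abel
    rw [BRK.frobNorm_eq, BRK.frobNorm_eq]
    congr 1
    calc BRK.fsq (A - Y) = BRK.fsq (A + Xᵀ) := by rw [h1]
      _ = BRK.fsq ((A + Xᵀ)ᵀ) := (BRK.fsq_transpose _).symm
      _ = BRK.fsq (-(A - X)) := by rw [h2]
      _ = BRK.fsq (A - X) := BRK.fsq_neg _
  have hYbest : ∀ W : Matrix (Fin n) (Fin n) ℝ, W.rank ≤ k →
      frobNorm (A - Y) ≤ frobNorm (A - W) := by
    intro W hW
    rw [hfq]
    exact hXbest W hW
  have e1 := BRK.minimizer_eq A hAA hA hk0 hkn g hμ0 hμmono hμgap X hXr hXbest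
  have e2 := BRK.minimizer_eq A hAA hA hk0 hkn g hμ0 hμmono hμgap Y hYr hYbest
  have hXY : X = Y := by rw [e1, ← e2]
  have hXY' : X = -Xᵀ := hXY.trans hY
  have h := congrArg Matrix.transpose hXY'
  rwa [Matrix.transpose_neg, Matrix.transpose_transpose] at h
end

section
/- With A = i(s eᵀ - e sᵀ), sᵀe = 0, s ≠ 0, the matrix sign (polar factor) of A is sign(A) = A/(‖s‖₂√n), i.e., this matrix is Hermitian with eigenvalues in {-1, 0, 1} and has the same range as A. -/
open Matrix Polynomial

lemma vecMulVec_mul_vecMulVec {n : ℕ} (a b c d : Fin n → ℂ) :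
    vecMulVec a b * vecMulVec c d = (b ⬝ᵥ c) • vecMulVec a d := by
  ext i j
  simp only [mul_apply, vecMulVec_apply, Matrix.smul_apply, smul_eq_mul, dotProduct,
    Finset.sum_mul]
  exact Finset.sum_congr rfl fun k _ => by ring

/-- For centered nonzero `s` and `A = i(s eᵀ - e sᵀ)`, the matrix sign (polar factor)
of `A` is `A/(‖s‖₂ √n)`: it is Hermitian, has eigenvalues in `{-1, 0, 1}`, and has
the same range as `A`. -/
theorem matrix_sign_of_pairwise (n : ℕ) (s : Fin n → ℝ)
    (hs : ∑ i, s i = 0) (hs0 : s ≠ 0) (e : Fin n → ℝ) (he : e = fun _ => 1)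
    (A : Matrix (Fin n) (Fin n) ℂ)
    (hA : A = Complex.I • (vecMulVec s e - vecMulVec e s).map Complex.ofReal)
    (S : Matrix (Fin n) (Fin n) ℂ)
    (hS : S = (((Real.sqrt (∑ i, s i ^ 2) * Real.sqrt n)⁻¹ : ℝ) : ℂ) • A) :
    Sᴴ = S ∧ (∀ μ ∈ spectrum ℂ S, μ = -1 ∨ μ = 0 ∨ μ = 1) ∧
      LinearMap.range S.mulVecLin = LinearMap.range A.mulVecLin := by
  have hn : 0 < n := by
    rcases Nat.eq_zero_or_pos n with h | h
    · subst h; exact absurd (_root_.funext fun i => Fin.elim0 i) hs0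
    · exact h
  have hσ : 0 < ∑ i, s i ^ 2 := by
    rcases Function.ne_iff.mp hs0 with ⟨i, hi⟩
    exact Finset.sum_pos' (fun j _ => sq_nonneg _)
      ⟨i, Finset.mem_univ i, sq_pos_of_ne_zero hi⟩
  set σ : ℝ := ∑ i, s i ^ 2 with hσdef
  set c : ℝ := (Real.sqrt σ * Real.sqrt n)⁻¹ with hc
  set s' : Fin n → ℂ := fun i => (s i : ℂ) with hs'
  set e' : Fin n → ℂ := fun i => (e i : ℂ) with he'
  set P : Matrix (Fin n) (Fin n) ℂ := vecMulVec s' e' with hP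
  set Q : Matrix (Fin n) (Fin n) ℂ := vecMulVec e' s' with hQ
  have hmap : (vecMulVec s e - vecMulVec e s).map Complex.ofReal = P - Q := by
    ext i j
    simp [vecMulVec_apply, hs', he', hP, hQ]
  have hse : s' ⬝ᵥ e' = 0 := by
    simp [dotProduct, hs', he', he, ← Complex.ofReal_sum, hs]
  have hes : e' ⬝ᵥ s' = 0 := by
    simp [dotProduct, hs', he', he, ← Complex.ofReal_sum, hs]
  have hss : s' ⬝ᵥ s' = (σ : ℂ) := by
    simp only [dotProduct, hs', hσdef]
    push_cast
    exact Finset.sum_congr rfl fun i _ => (sq (s i : ℂ)).symm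
  have hee : e' ⬝ᵥ e' = (n : ℂ) := by
    simp [dotProduct, he', he]
  have hAH : Aᴴ = A := by
    rw [hA, hmap]
    ext i j
    simp only [conjTranspose_apply, Matrix.smul_apply, Matrix.sub_apply, vecMulVec_apply, hP, hQ,
      smul_eq_mul, star_mul', star_sub, Complex.star_def, Complex.conj_I, hs', he',
      Complex.conj_ofReal]
    ring
  have hSH : Sᴴ = S := by
    rw [hS, conjTranspose_smul, hAH, Complex.star_def, Complex.conj_ofReal]
  have hM3 : (P - Q) * (P - Q) * (P - Q) = (-((n : ℂ) * σ)) • (P - Q) := by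
    simp only [sub_mul, mul_sub, hP, hQ, _root_.vecMulVec_mul_vecMulVec, Matrix.smul_mul,
      Matrix.mul_smul, hse, hes, hss, hee, zero_smul, smul_zero, Matrix.zero_mul,
      Matrix.mul_zero, neg_mul, mul_neg, smul_smul, zero_sub, sub_zero, neg_sub,
      zero_mul, mul_zero, sub_self, neg_zero]
    rw [smul_sub]
    module
  have hA3 : A * A * A = ((n : ℂ) * σ) • A := by
    rw [hA, hmap]
    simp only [Matrix.smul_mul, Matrix.mul_smul, smul_smul, hM3]
    congr 1
    linear_combination (-((n : ℂ) * σ) * Complex.I) * Complex.I_mul_I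
  have hcns : (c : ℂ) ^ 2 * ((n : ℂ) * σ) = 1 := by
    have h1 : c ^ 2 = (σ * n)⁻¹ := by
      rw [hc, ← Real.sqrt_mul hσ.le, ← Real.sqrt_inv,
        Real.sq_sqrt (by positivity)]
    have h2 : c ^ 2 * ((n : ℝ) * σ) = 1 := by
      rw [h1, mul_comm (n : ℝ) σ, inv_mul_cancel₀ (by positivity)]
    calc (c : ℂ) ^ 2 * ((n : ℂ) * σ) = ((c ^ 2 * ((n : ℝ) * σ) : ℝ) : ℂ) := by
          push_cast; ring
    _ = 1 := by rw [h2]; norm_num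
  have hS3 : S * S * S = S := by
    rw [hS]
    simp only [Matrix.smul_mul, Matrix.mul_smul, smul_smul, hA3]
    congr 1
    linear_combination (c : ℂ) * hcns
  refine ⟨hSH, ?_, ?_⟩
  · intro μ hμ
    have key : μ ^ 3 - μ ∈ spectrum ℂ ((aeval S) (X ^ 3 - X : ℂ[X])) :=
      spectrum.subset_polynomial_aeval S (X ^ 3 - X : ℂ[X]) ⟨μ, hμ, by simp⟩
    have h0 : (aeval S) (X ^ 3 - X : ℂ[X]) = 0 := by
      rw [map_sub, map_pow, aeval_X, sub_eq_zero, pow_succ, pow_two, hS3]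
    rw [h0] at key
    haveI : Nonempty (Fin n) := ⟨⟨0, hn⟩⟩
    rw [spectrum.zero_eq] at key
    have h1 : μ ^ 3 - μ = 0 := by simpa using key
    have h2 : μ * (μ - 1) * (μ + 1) = 0 := by linear_combination h1
    rcases mul_eq_zero.mp h2 with h | h
    · rcases mul_eq_zero.mp h with h | h
      · exact Or.inr (Or.inl h)
      · exact Or.inr (Or.inr (by linear_combination h))
    · exact Or.inl (by linear_combination h)
  · have hc0 : (c : ℂ) ≠ 0 := by
      intro h
      rw [h] at hcns; simp at hcns
    have hlin : S.mulVecLin = (c : ℂ) • A.mulVecLin := by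
      rw [hS]; ext v i; simp [mulVecLin_apply, smul_mulVec]
    rw [hlin, LinearMap.range_smul _ _ hc0]
end

section
/- With A = i(s eᵀ - e sᵀ), sᵀe = 0, s ≠ 0, and the basis element K_{pq} = (i/√2)(e_p e_qᵀ - e_q e_pᵀ) for p < q, the quantity tr(sign(A) K_{pq})² equals 2(s_p - s_q)²/(n sᵀs), which is at most (2/n)ρ² where ρ = (max_i s_i - min_i s_i)/‖s‖₂. -/
open Matrix

lemma aux_trace_mul_stdBasis (n : ℕ) (M : Matrix (Fin n) (Fin n) ℂ) (p q : Fin n) :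
    Matrix.trace (M * Matrix.single p q 1) = M q p := by
  rw [Matrix.trace, Finset.sum_eq_single q]
  · simp [Matrix.diag]
  · intro b _ hb
    exact Matrix.mul_single_apply_of_ne (c := (1:ℂ)) p q b b hb M
  · simp

/-- Coherence computation with the skew basis elements: for `p < q`,
`tr(sign(A) K_{pq})² = 2(s_p - s_q)²/(n sᵀs) ≤ (2/n) ρ²` where
`ρ = (max_i s_i - min_i s_i)/‖s‖₂`. -/
theorem coherence_skew_basis (n : ℕ) (s : Fin n → ℝ)
    (hs : ∑ i, s i = 0) (hs0 : s ≠ 0) (e : Fin n → ℝ) (he : e = fun _ => 1)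
    (p q : Fin n) (hpq : p < q)
    (A : Matrix (Fin n) (Fin n) ℂ)
    (hA : A = Complex.I • (vecMulVec s e - vecMulVec e s).map Complex.ofReal)
    (S : Matrix (Fin n) (Fin n) ℂ)
    (hS : S = (((Real.sqrt (∑ i, s i ^ 2) * Real.sqrt n)⁻¹ : ℝ) : ℂ) • A)
    (K : Matrix (Fin n) (Fin n) ℂ)
    (hK : K = (Complex.I / ((Real.sqrt 2 : ℝ) : ℂ)) •
      (Matrix.single p q 1 - Matrix.single q p 1)) :
    (Matrix.trace (S * K)) ^ 2
        = ((2 * (s p - s q) ^ 2 / (n * ∑ i, s i ^ 2) : ℝ) : ℂ) ∧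
      2 * (s p - s q) ^ 2 / (n * ∑ i, s i ^ 2)
        ≤ (2 / n) * (((⨆ i, s i) - ⨅ i, s i) / Real.sqrt (∑ i, s i ^ 2)) ^ 2 := by
  -- basic positivity facts
  have hn : 0 < (n : ℝ) := by exact_mod_cast p.pos
  have hSum : 0 < ∑ i, s i ^ 2 := by
    rcases Function.ne_iff.mp hs0 with ⟨j, hj⟩
    exact Finset.sum_pos' (fun i _ => sq_nonneg _)
      ⟨j, Finset.mem_univ j, lt_of_le_of_ne (sq_nonneg _) (Ne.symm (pow_ne_zero 2 hj))⟩
  -- the trace value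
  have htrace : Matrix.trace (S * K) =
      ((Real.sqrt 2 * (s p - s q) * (Real.sqrt (∑ i, s i ^ 2) * Real.sqrt n)⁻¹ : ℝ) : ℂ) := by
    have h2 : ((Real.sqrt 2 : ℝ) : ℂ) ≠ 0 := by
      simp [Real.sqrt_ne_zero'.mpr (by norm_num : (0:ℝ) < 2)]
    have h22 : ((Real.sqrt 2:ℝ):ℂ) * ((Real.sqrt 2:ℝ):ℂ) = 2 := by
      rw [← Complex.ofReal_mul, Real.mul_self_sqrt (by norm_num)]; norm_num
    have h3 : ((Real.sqrt 2:ℝ):ℂ) * ((Real.sqrt 2:ℝ):ℂ) * (((Real.sqrt 2:ℝ):ℂ))⁻¹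
        = ((Real.sqrt 2:ℝ):ℂ) := mul_inv_cancel_right₀ h2 _
    subst hS hA hK he
    rw [Matrix.smul_mul, Matrix.mul_smul, Matrix.mul_sub, trace_smul, trace_smul, trace_sub,
      aux_trace_mul_stdBasis, aux_trace_mul_stdBasis]
    simp only [Matrix.smul_apply, Matrix.map_apply, Matrix.sub_apply, Matrix.vecMulVec_apply,
      smul_eq_mul]
    push_cast
    ring_nf
    rw [Complex.I_sq]
    ring_nf
    linear_combination ((Real.sqrt (∑ x, s x ^ 2):ℝ):ℂ)⁻¹ * ((Real.sqrt n:ℝ):ℂ)⁻¹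
      * ((s p:ℂ) - (s q:ℂ)) * h3 + ((Real.sqrt (∑ x, s x ^ 2):ℝ):ℂ)⁻¹ * ((Real.sqrt n:ℝ):ℂ)⁻¹
      * (((Real.sqrt 2:ℝ):ℂ))⁻¹ * ((s q:ℂ) - (s p:ℂ)) * h22
  constructor
  · rw [htrace, ← Complex.ofReal_pow]
    norm_cast
    rw [mul_pow, mul_pow, Real.sq_sqrt (by norm_num : (2:ℝ) ≥ 0), inv_pow, mul_pow,
      Real.sq_sqrt hSum.le, Real.sq_sqrt hn.le]
    rw [div_eq_mul_inv]
    ring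
  · -- the inequality
    have hbddA : BddAbove (Set.range s) := (Set.finite_range s).bddAbove
    have hbddB : BddBelow (Set.range s) := (Set.finite_range s).bddBelow
    have hsup : ∀ i, s i ≤ ⨆ j, s j := fun i => le_ciSup hbddA i
    have hinf : ∀ i, ⨅ j, s j ≤ s i := fun i => ciInf_le hbddB i
    have hd : (s p - s q) ^ 2 ≤ ((⨆ i, s i) - ⨅ i, s i) ^ 2 := by
      apply sq_le_sq'
      · nlinarith [hsup q, hinf p]
      · nlinarith [hsup p, hinf q]
    have hrw : (((⨆ i, s i) - ⨅ i, s i) / Real.sqrt (∑ i, s i ^ 2)) ^ 2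
        = ((⨆ i, s i) - ⨅ i, s i) ^ 2 / (∑ i, s i ^ 2) := by
      rw [div_pow, Real.sq_sqrt hSum.le]
    rw [hrw, div_mul_div_comm]
    gcongr
end
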